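/- Let Z ⊆ {0,1}^n be a code of size N with dual distance distribution (A_k^⊥)_{k=0}^n. Then the quadratic discrepancy of Z satisfies D^{L2}(Z) = 2^{−n}·Σ_{k=1}^n A_k^⊥·Σ_{t=0}^{n−1} (K_t^{(n−1)}(k−1))². -/

import Mathlib

/-- The quadratic discrepancy of a code `Z ⊆ {0,1}^n`. -/
noncomputable def disc (n : ℕ) (Z : Finset (Fin n → Bool)) : ℝ :=
  ∑ t ∈ Finset.range (n + 1), ∑ x : Fin n → Bool,
    ((Z.card : ℝ)⁻¹ * ((Z.filter (fun z => hammingDist x z ≤ t)).card : ℝ)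
      - ((2 : ℝ) ^ n)⁻¹ *
          ((Finset.univ.filter (fun z : Fin n → Bool => hammingDist x z ≤ t)).card : ℝ)) ^ 2

/-- The distance distribution `A_w = (1/N)·|{(z,z') ∈ Z×Z : d(z,z') = w}|` of a code. -/
noncomputable def distDistr (n : ℕ) (Z : Finset (Fin n → Bool)) (w : ℕ) : ℝ :=
  (Z.card : ℝ)⁻¹ * (((Z ×ˢ Z).filter (fun p => hammingDist p.1 p.2 = w)).card : ℝ)

/-- The Krawtchouk polynomial `K_k^{(n)}(x) = Σ_{i=0}^k (−1)^i·C(x,i)·C(n−x,k−i)`. -/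
def kraw (n k x : ℕ) : ℤ :=
  ∑ i ∈ Finset.range (k + 1),
    (-1 : ℤ) ^ i * (Nat.choose x i : ℤ) * (Nat.choose (n - x) (k - i) : ℤ)

/-- The dual distance distribution `A_w^⊥ = (1/N)·Σ_{i=0}^n K_w^{(n)}(i)·A_i` of a code. -/
noncomputable def dualDistDistr (n : ℕ) (Z : Finset (Fin n → Bool)) (w : ℕ) : ℝ :=
  (Z.card : ℝ)⁻¹ * ∑ i ∈ Finset.range (n + 1), (kraw n w i : ℝ) * distDistr n Z i

namespace Aux
open Finset

variable {n : ℕ}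

def wt (y : Fin n → Bool) : ℕ := (Finset.univ.filter fun i => y i = true).card

noncomputable def chi (s x : Fin n → Bool) : ℝ :=
  ∏ i, (if s i = true ∧ x i = true then (-1 : ℝ) else 1)

lemma chi_comm (s x : Fin n → Bool) : chi s x = chi x s := by
  simp [chi, and_comm]

lemma chi_mul (s x x' : Fin n → Bool) :
    chi s x * chi s x' = chi s (fun i => xor (x i) (x' i)) := by
  rw [chi, chi, chi, ← Finset.prod_mul_distrib]
  apply Finset.prod_congr rfl
  intro i _
  cases hs : s i <;> cases hx : x i <;> cases hx' : x' i <;> simp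

lemma chi_zero (x : Fin n → Bool) : chi (fun _ => false) x = 1 := by simp [chi]

lemma sum_chi (s : Fin n → Bool) :
    ∑ x : Fin n → Bool, chi s x =
      if s = (fun _ => false) then (2 : ℝ) ^ n else 0 := by
  have h : ∑ x : Fin n → Bool, chi s x
      = ∏ i, ∑ b : Bool, (if s i = true ∧ b = true then (-1 : ℝ) else 1) := by
    rw [Finset.prod_univ_sum]
    rw [Fintype.piFinset_univ]
    rfl
  rw [h]
  by_cases hs : s = (fun _ => false)
  · subst hs; simp
  · rw [if_neg hs]
    obtain ⟨i, hi⟩ : ∃ i, s i = true := by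
      by_contra hc
      push_neg at hc
      exact hs (funext fun i => by simpa using hc i)
    apply Finset.prod_eq_zero (Finset.mem_univ i)
    simp [hi]

lemma chi_eq_pow (s y : Fin n → Bool) :
    chi s y = (-1 : ℝ) ^ (Finset.univ.filter fun i => s i = true ∧ y i = true).card := by
  rw [chi, ← Finset.prod_filter_mul_prod_filter_not Finset.univ
    (fun i => s i = true ∧ y i = true)]
  rw [Finset.prod_congr rfl (fun i hi => if_pos (Finset.mem_filter.mp hi).2),
    Finset.prod_congr rfl (fun i hi => if_neg (Finset.mem_filter.mp hi).2)]
  simp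

lemma card_fiber (w i : ℕ) (hi : i ≤ w) (s : Fin n → Bool) :
    ((Finset.univ : Finset (Fin n → Bool)).filter (fun y => wt y = w ∧
        (Finset.univ.filter fun j => s j = true ∧ y j = true).card = i)).card
      = Nat.choose (wt s) i * Nat.choose (n - wt s) (w - i) := by
  classical
  set S : Finset (Fin n) := Finset.univ.filter (fun j => s j = true) with hS
  have key : ∀ y : Fin n → Bool,
      (Finset.univ.filter fun j => s j = true ∧ y j = true)
        = S ∩ (Finset.univ.filter fun j => y j = true) := by
    intro y; rw [hS, ← Finset.filter_and]
  have hSc : wt s = S.card := rfl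
  have hScc : n - S.card = (Sᶜ).card := by rw [Finset.card_compl, Fintype.card_fin]
  rw [hSc, hScc, ← Finset.card_powersetCard, ← Finset.card_powersetCard, ← Finset.card_product]
  refine Finset.card_bij'
    (fun y _ => ((Finset.univ.filter fun j => y j = true) ∩ S,
                 (Finset.univ.filter fun j => y j = true) \ S))
    (fun p _ => (fun j => decide (j ∈ p.1 ∪ p.2))) ?_ ?_ ?_ ?_
  · intro y hy
    simp only [Finset.mem_filter, Finset.mem_univ, true_and] at hy
    obtain ⟨hw, hcard⟩ := hy
    rw [key, Finset.inter_comm] at hcard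
    simp only [Finset.mem_product, Finset.mem_powersetCard]
    refine ⟨⟨Finset.inter_subset_right, hcard⟩, ⟨?_, ?_⟩⟩
    · intro j hj
      simp only [Finset.mem_sdiff] at hj
      simpa using hj.2
    · have hsplit : ((Finset.univ.filter fun j => y j = true) ∩ S).card
          + ((Finset.univ.filter fun j => y j = true) \ S).card
          = (Finset.univ.filter fun j => y j = true).card := by
        rw [Finset.card_inter_add_card_sdiff]
      rw [wt] at hw
      omega
  · intro p hp
    simp only [Finset.mem_product, Finset.mem_powersetCard] at hp
    obtain ⟨⟨h1, h1c⟩, ⟨h2, h2c⟩⟩ := hp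
    have hsupp : (Finset.univ.filter fun j => (decide (j ∈ p.1 ∪ p.2)) = true) = p.1 ∪ p.2 := by
      ext j; simp
    have hdisj : Disjoint p.1 p.2 := by
      refine Finset.disjoint_left.mpr fun a ha1 ha2 => ?_
      have := h2 ha2
      simp only [Finset.mem_compl] at this
      exact this (h1 ha1)
    simp only [Finset.mem_filter, Finset.mem_univ, true_and]
    constructor
    · rw [wt, hsupp, Finset.card_union_of_disjoint hdisj, h1c, h2c]
      omega
    · rw [key, hsupp, Finset.inter_comm]
      have : (p.1 ∪ p.2) ∩ S = p.1 := by
        rw [Finset.union_inter_distrib_right]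
        have e1 : p.1 ∩ S = p.1 := Finset.inter_eq_left.mpr h1
        have e2 : p.2 ∩ S = ∅ := by
          refine Finset.eq_empty_of_forall_notMem fun a ha => ?_
          rw [Finset.mem_inter] at ha
          have := h2 ha.1
          simp only [Finset.mem_compl] at this
          exact this ha.2
        rw [e1, e2, Finset.union_empty]
      rw [this, h1c]
  · intro y _
    funext j
    simp only
    rw [Finset.union_comm, Finset.sdiff_union_inter]
    simp only [Finset.mem_filter, Finset.mem_univ, true_and]
    cases h : y j <;> simp [h]
  · intro p hp
    simp only [Finset.mem_product, Finset.mem_powersetCard] at hp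
    obtain ⟨⟨h1, _⟩, ⟨h2, _⟩⟩ := hp
    have hsupp : (Finset.univ.filter fun j => (decide (j ∈ p.1 ∪ p.2)) = true) = p.1 ∪ p.2 := by
      ext j; simp
    have e2 : p.2 ∩ S = ∅ := by
      refine Finset.eq_empty_of_forall_notMem fun a ha => ?_
      rw [Finset.mem_inter] at ha
      have := h2 ha.1
      simp only [Finset.mem_compl] at this
      exact this ha.2
    have e1 : p.1 ∩ S = p.1 := Finset.inter_eq_left.mpr h1
    ext1
    · simp only [hsupp]
      rw [Finset.union_inter_distrib_right, e1, e2, Finset.union_empty]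
    · simp only [hsupp]
      rw [Finset.union_sdiff_distrib]
      have f1 : p.1 \ S = ∅ := by
        rw [Finset.sdiff_eq_empty_iff_subset]; exact h1
      have f2 : p.2 \ S = p.2 := by
        rw [Finset.sdiff_eq_self_iff_disjoint]
        refine Finset.disjoint_left.mpr fun a ha1 ha2 => ?_
        have := h2 ha1
        simp only [Finset.mem_compl] at this
        exact this ha2
      rw [f1, f2, Finset.empty_union]

lemma wt_card (s : Fin n → Bool) :
    (Finset.univ.filter fun j => s j = true).card = wt s := rfl

lemma card_compl_S (s : Fin n → Bool) :
    ((Finset.univ.filter fun j => s j = true)ᶜ : Finset (Fin n)).card = n - wt s := by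
  rw [Finset.card_compl, wt_card, Fintype.card_fin]

end Aux

namespace Aux
variable {n : ℕ}

lemma sum_chi_wt (w : ℕ) (s : Fin n → Bool) :
    ∑ y ∈ Finset.univ.filter (fun y : Fin n → Bool => wt y = w), chi s y
      = ((kraw n w (wt s) : ℤ) : ℝ) := by
  classical
  have hmaps : ∀ y ∈ (Finset.univ.filter fun y : Fin n → Bool => wt y = w),
      (Finset.univ.filter fun j => s j = true ∧ y j = true).card ∈ Finset.range (w+1) := by
    intro y hy
    rw [Finset.mem_filter] at hy
    rw [Finset.mem_range, Nat.lt_succ_iff, ← hy.2]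
    apply Finset.card_le_card
    intro j hj
    rw [Finset.mem_filter] at hj ⊢
    exact ⟨hj.1, hj.2.2⟩
  rw [← Finset.sum_fiberwise_of_maps_to hmaps (chi s), kraw]
  push_cast
  apply Finset.sum_congr rfl
  intro i hi
  rw [Finset.mem_range, Nat.lt_succ_iff] at hi
  have : ∀ y ∈ (Finset.univ.filter fun y : Fin n → Bool => wt y = w).filter
      (fun y => (Finset.univ.filter fun j => s j = true ∧ y j = true).card = i),
      chi s y = (-1 : ℝ) ^ i := by
    intro y hy
    rw [chi_eq_pow, (Finset.mem_filter.mp hy).2]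
  rw [Finset.sum_congr rfl this, Finset.sum_const, Finset.filter_filter,
    card_fiber w i hi s, nsmul_eq_mul]
  push_cast
  ring
end Aux

lemma kraw_rec (m t k : ℕ) :
    kraw (m+1) (t+1) (k+1) = kraw m (t+1) k - kraw m t k := by
  have e1 : kraw (m+1) (t+1) (k+1)
      = (∑ i ∈ Finset.range (t+1),
          (-1:ℤ)^(i+1) * (Nat.choose (k+1) (i+1) : ℤ) * (Nat.choose (m-k) (t-i) : ℤ))
        + (Nat.choose (m-k) (t+1) : ℤ) := by
    rw [kraw, Finset.sum_range_succ']
    simp [Nat.succ_sub_succ]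
  have e2 : kraw m (t+1) k
      = (∑ i ∈ Finset.range (t+1),
          (-1:ℤ)^(i+1) * (Nat.choose k (i+1) : ℤ) * (Nat.choose (m-k) (t-i) : ℤ))
        + (Nat.choose (m-k) (t+1) : ℤ) := by
    rw [kraw, Finset.sum_range_succ']
    simp [Nat.succ_sub_succ]
  have e3 : kraw m t k
      = ∑ i ∈ Finset.range (t+1),
          (-1:ℤ)^i * (Nat.choose k i : ℤ) * (Nat.choose (m-k) (t-i) : ℤ) := by
    rw [kraw]
  rw [e1, e2, e3]
  have : (∑ i ∈ Finset.range (t+1),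
          (-1:ℤ)^(i+1) * (Nat.choose k (i+1) : ℤ) * (Nat.choose (m-k) (t-i) : ℤ))
      - ∑ i ∈ Finset.range (t+1),
          (-1:ℤ)^i * (Nat.choose k i : ℤ) * (Nat.choose (m-k) (t-i) : ℤ)
      = ∑ i ∈ Finset.range (t+1),
          (-1:ℤ)^(i+1) * (Nat.choose (k+1) (i+1) : ℤ) * (Nat.choose (m-k) (t-i) : ℤ) := by
    rw [← Finset.sum_sub_distrib]
    apply Finset.sum_congr rfl
    intro i _
    rw [Nat.choose_succ_succ]
    push_cast
    ring
  linarith [this]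

lemma kraw_sum (m t k : ℕ) :
    ∑ w ∈ Finset.range (t+1), kraw (m+1) w (k+1) = kraw m t k := by
  induction t with
  | zero => simp [kraw]
  | succ t ih => rw [Finset.sum_range_succ, ih, kraw_rec]; ring

namespace Aux2
open Aux Finset
variable {n : ℕ}

lemma xor_eq_zero_iff (y u : Fin n → Bool) :
    (fun i => xor (y i) (u i)) = (fun _ => false) ↔ y = u := by
  constructor
  · intro h
    funext i
    have := congrFun h i
    cases hy : y i <;> cases hu : u i <;> simp_all
  · intro h; subst h; funext i; simp

lemma sum_chi' (v : Fin n → Bool) :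
    ∑ s : Fin n → Bool, chi s v = if v = (fun _ => false) then (2 : ℝ) ^ n else 0 := by
  rw [Finset.sum_congr rfl (fun s _ => chi_comm s v)]
  exact sum_chi v

lemma chi_mul' (s s' x : Fin n → Bool) :
    chi s x * chi s' x = chi (fun i => xor (s i) (s' i)) x := by
  rw [chi_comm s x, chi_comm s' x, chi_comm _ x]
  exact chi_mul x s s'

noncomputable def ff (n t : ℕ) (u : Fin n → Bool) : ℝ := if wt u ≤ t then 1 else 0

noncomputable def Fh (n t : ℕ) (s : Fin n → Bool) : ℝ := ∑ y : Fin n → Bool, ff n t y * chi s y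

lemma ff_inv (t : ℕ) (u : Fin n → Bool) :
    ff n t u = ((2:ℝ)^n)⁻¹ * ∑ s : Fin n → Bool, Fh n t s * chi s u := by
  have h1 : ∀ s : Fin n → Bool, Fh n t s * chi s u
      = ∑ y : Fin n → Bool, ff n t y * chi s (fun i => xor (y i) (u i)) := by
    intro s
    rw [Fh, Finset.sum_mul]
    exact Finset.sum_congr rfl fun y _ => by rw [mul_assoc, chi_mul]
  rw [Finset.sum_congr rfl (fun s _ => h1 s), Finset.sum_comm]
  have h2 : ∀ y : Fin n → Bool,
      (∑ s : Fin n → Bool, ff n t y * chi s (fun i => xor (y i) (u i)))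
      = if y = u then ff n t y * (2:ℝ)^n else 0 := by
    intro y
    rw [← Finset.mul_sum, sum_chi']
    simp only [xor_eq_zero_iff]
    by_cases h : y = u <;> simp [h]
  rw [Finset.sum_congr rfl (fun y _ => h2 y), Finset.sum_ite_eq' Finset.univ u]
  simp only [Finset.mem_univ, if_pos]
  field_simp

lemma parseval (a : (Fin n → Bool) → ℝ) :
    ∑ x : Fin n → Bool, (∑ s : Fin n → Bool, a s * chi s x)^2
      = 2^n * ∑ s : Fin n → Bool, (a s)^2 := by
  have h1 : ∀ x : Fin n → Bool, (∑ s : Fin n → Bool, a s * chi s x)^2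
      = ∑ s : Fin n → Bool, ∑ s' : Fin n → Bool,
          a s * a s' * chi (fun i => xor (s i) (s' i)) x := by
    intro x
    rw [sq, Finset.sum_mul_sum]
    exact Finset.sum_congr rfl fun s _ => Finset.sum_congr rfl fun s' _ => by
      rw [← chi_mul' s s' x]; ring
  rw [Finset.sum_congr rfl (fun x _ => h1 x), Finset.sum_comm]
  have h2 : ∀ s : Fin n → Bool,
      (∑ x : Fin n → Bool, ∑ s' : Fin n → Bool,
          a s * a s' * chi (fun i => xor (s i) (s' i)) x)
      = (a s)^2 * 2^n := by
    intro s
    rw [Finset.sum_comm]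
    have h3 : ∀ s' : Fin n → Bool,
        (∑ x : Fin n → Bool, a s * a s' * chi (fun i => xor (s i) (s' i)) x)
        = if s' = s then (a s)^2 * 2^n else 0 := by
      intro s'
      rw [← Finset.mul_sum, sum_chi]
      by_cases h : s' = s
      · subst h; rw [if_pos ((xor_eq_zero_iff _ _).mpr rfl), if_pos rfl]; ring
      · rw [if_neg (fun hc => h ((xor_eq_zero_iff _ _).mp hc).symm), if_neg h, mul_zero]
    rw [Finset.sum_congr rfl (fun s' _ => h3 s'), Finset.sum_ite_eq' Finset.univ s]
    simp
  rw [Finset.sum_congr rfl (fun s _ => h2 s), Finset.mul_sum]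
  exact Finset.sum_congr rfl fun s _ => by ring

end Aux2

lemma kraw_eq_zero {m t x : ℕ} (hx : x ≤ m) (ht : m < t) : kraw m t x = 0 := by
  rw [kraw]
  apply Finset.sum_eq_zero
  intro i _
  by_cases h : i ≤ x
  · rw [Nat.choose_eq_zero_of_lt (show m - x < t - i by omega)]
    ring
  · rw [Nat.choose_eq_zero_of_lt (show x < i by omega)]
    push_cast
    ring

namespace Aux2
open Aux Finset
variable {n : ℕ}

noncomputable def cc (n : ℕ) (Z : Finset (Fin n → Bool)) (z : Fin n → Bool) : ℝ :=
  (Z.card : ℝ)⁻¹ * (if z ∈ Z then 1 else 0) - ((2:ℝ)^n)⁻¹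

noncomputable def Wc (n : ℕ) (Z : Finset (Fin n → Bool)) (s : Fin n → Bool) : ℝ :=
  ∑ z ∈ Z, chi s z

lemma hamming_wt (x z : Fin n → Bool) :
    hammingDist x z = wt (fun i => xor (x i) (z i)) := by
  rw [hammingDist, wt]
  congr 1
  apply Finset.filter_congr
  intro i _
  cases hx : x i <;> cases hz : z i <;> simp

lemma wt_eq_zero_iff (s : Fin n → Bool) : wt s = 0 ↔ s = (fun _ => false) := by
  rw [wt, Finset.card_eq_zero, Finset.filter_eq_empty_iff]
  constructor
  · intro h; funext i; simpa using h (Finset.mem_univ i)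
  · intro h i _; rw [h]; simp

lemma wt_le (s : Fin n → Bool) : wt s ≤ n := by
  rw [wt]
  calc (Finset.univ.filter fun i => s i = true).card
      ≤ (Finset.univ : Finset (Fin n)).card := Finset.card_filter_le _ _
    _ = n := by simp

lemma indicator_sum (f : (Fin n → Bool) → ℝ) (Z : Finset (Fin n → Bool)) :
    ∑ z : Fin n → Bool, (if z ∈ Z then (1:ℝ) else 0) * f z = ∑ z ∈ Z, f z := by
  rw [Finset.sum_congr rfl (fun z _ => by rw [ite_mul, one_mul, zero_mul])]
  rw [Finset.sum_ite_mem, Finset.univ_inter]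

lemma cc_hat (Z : Finset (Fin n → Bool)) (hZ : Z.Nonempty) (s : Fin n → Bool) :
    ∑ z : Fin n → Bool, cc n Z z * chi s z
      = if s = (fun _ => false) then 0 else (Z.card : ℝ)⁻¹ * Wc n Z s := by
  have hsum : ∑ z : Fin n → Bool, cc n Z z * chi s z
      = (Z.card:ℝ)⁻¹ * (∑ z ∈ Z, chi s z)
        - ((2:ℝ)^n)⁻¹ * ∑ z : Fin n → Bool, chi s z := by
    rw [Finset.sum_congr rfl (fun z (_ : z ∈ Finset.univ) =>
      (by rw [cc]; ring : cc n Z z * chi s z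
        = (Z.card:ℝ)⁻¹ * ((if z ∈ Z then (1:ℝ) else 0) * chi s z)
          - ((2:ℝ)^n)⁻¹ * chi s z))]
    rw [Finset.sum_sub_distrib, ← Finset.mul_sum, ← Finset.mul_sum, indicator_sum]
  rw [hsum]
  by_cases hs : s = (fun _ => false)
  · subst hs
    rw [if_pos rfl]
    have h1 : ∑ z ∈ Z, chi (fun _ => false) z = (Z.card : ℝ) := by
      rw [Finset.sum_congr rfl (fun z _ => chi_zero z), Finset.sum_const, nsmul_eq_mul, mul_one]
    have h2 : ∑ z : Fin n → Bool, chi (fun _ => false) z = (2:ℝ)^n := by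
      rw [sum_chi, if_pos rfl]
    rw [h1, h2, inv_mul_cancel₀ (by exact_mod_cast Finset.card_ne_zero.mpr hZ),
      inv_mul_cancel₀ (by positivity : ((2:ℝ)^n) ≠ 0), sub_self]
  · rw [if_neg hs, sum_chi, if_neg hs, mul_zero, sub_zero, Wc]

end Aux2

namespace Aux2
open Aux Finset
variable {n : ℕ}

lemma Fh_eq (t : ℕ) (s : Fin n → Bool) (hs : s ≠ (fun _ => false)) :
    Fh n t s = ((kraw (n-1) t (wt s - 1) : ℤ) : ℝ) := by
  have hk0 : wt s ≠ 0 := fun h => hs ((wt_eq_zero_iff s).mp h)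
  obtain ⟨k, hk⟩ : ∃ k, wt s = k + 1 := ⟨wt s - 1, by omega⟩
  obtain ⟨m, hm⟩ : ∃ m, n = m + 1 := ⟨n - 1, by have := wt_le s; omega⟩
  have step1 : Fh n t s
      = ∑ y ∈ Finset.univ.filter (fun y : Fin n → Bool => wt y ≤ t), chi s y := by
    rw [Fh, Finset.sum_filter]
    apply Finset.sum_congr rfl
    intro y _
    rw [ff, ite_mul, one_mul, zero_mul]
  have hmaps : ∀ y ∈ Finset.univ.filter (fun y : Fin n → Bool => wt y ≤ t),
      wt y ∈ Finset.range (t+1) := by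
    intro y hy
    rw [Finset.mem_filter] at hy
    rw [Finset.mem_range]
    omega
  rw [step1, ← Finset.sum_fiberwise_of_maps_to hmaps (chi s)]
  have fib : ∀ w ∈ Finset.range (t+1),
      ∑ y ∈ (Finset.univ.filter (fun y : Fin n → Bool => wt y ≤ t)).filter
          (fun y => wt y = w), chi s y
        = ((kraw n w (wt s) : ℤ) : ℝ) := by
    intro w hw
    rw [Finset.mem_range] at hw
    rw [Finset.filter_filter]
    have : (Finset.univ.filter fun y : Fin n → Bool => wt y ≤ t ∧ wt y = w)
        = Finset.univ.filter (fun y : Fin n → Bool => wt y = w) := by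
      apply Finset.filter_congr
      intro y _
      constructor
      · exact fun h => h.2
      · exact fun h => ⟨by omega, h⟩
    rw [this, sum_chi_wt]
  rw [Finset.sum_congr rfl fib]
  have : ∑ w ∈ Finset.range (t+1), ((kraw n w (wt s) : ℤ) : ℝ)
      = ((∑ w ∈ Finset.range (t+1), kraw n w (wt s) : ℤ) : ℝ) := by push_cast; rfl
  rw [this]
  congr 1
  subst hm
  rw [hk]
  have := kraw_sum m t k
  simpa using this

lemma step_t (Z : Finset (Fin n → Bool)) (hZ : Z.Nonempty) (t : ℕ) :
    ∑ x : Fin n → Bool, (∑ z : Fin n → Bool, cc n Z z * ff n t (fun i => xor (x i) (z i)))^2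
      = ((2:ℝ)^n)⁻¹ * ∑ s ∈ Finset.univ.filter (fun s : Fin n → Bool => s ≠ (fun _ => false)),
          ((Z.card:ℝ)⁻¹ * Wc n Z s)^2 * (Fh n t s)^2 := by
  classical
  set A : (Fin n → Bool) → ℝ :=
    fun s => ((2:ℝ)^n)⁻¹ * Fh n t s * (∑ z : Fin n → Bool, cc n Z z * chi s z) with hA
  have hg : ∀ x : Fin n → Bool,
      ∑ z : Fin n → Bool, cc n Z z * ff n t (fun i => xor (x i) (z i))
        = ∑ s : Fin n → Bool, A s * chi s x := by
    intro x
    have e1 : ∀ z : Fin n → Bool,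
        cc n Z z * ff n t (fun i => xor (x i) (z i))
          = ∑ s : Fin n → Bool, cc n Z z * (((2:ℝ)^n)⁻¹ * (Fh n t s * (chi s x * chi s z))) := by
      intro z
      rw [ff_inv t (fun i => xor (x i) (z i)), Finset.mul_sum, Finset.mul_sum]
      apply Finset.sum_congr rfl
      intro s _
      rw [chi_mul s x z]
    rw [Finset.sum_congr rfl (fun z _ => e1 z), Finset.sum_comm]
    apply Finset.sum_congr rfl
    intro s _
    rw [Finset.sum_congr rfl (fun z (_ : z ∈ Finset.univ) =>
      (by ring : cc n Z z * (((2:ℝ)^n)⁻¹ * (Fh n t s * (chi s x * chi s z)))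
        = (((2:ℝ)^n)⁻¹ * Fh n t s * (cc n Z z * chi s z)) * chi s x))]
    rw [← Finset.sum_mul, ← Finset.mul_sum, hA]
  rw [Finset.sum_congr rfl (fun x _ => by rw [hg x]), parseval A]
  have hA0 : ∀ s ∈ (Finset.univ : Finset (Fin n → Bool)),
      s ∉ Finset.univ.filter (fun s : Fin n → Bool => s ≠ (fun _ => false)) → (A s)^2 = 0 := by
    intro s _ hs
    simp only [Finset.mem_filter, Finset.mem_univ, true_and, not_not] at hs
    rw [hA]
    simp only
    rw [cc_hat Z hZ s, if_pos hs]
    ring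
  rw [← Finset.sum_subset (Finset.filter_subset _ _) hA0, Finset.mul_sum, Finset.mul_sum]
  apply Finset.sum_congr rfl
  intro s hs
  simp only [Finset.mem_filter, Finset.mem_univ, true_and] at hs
  rw [hA]
  simp only
  rw [cc_hat Z hZ s, if_neg hs]
  have h2 : ((2:ℝ)^n) ≠ 0 := by positivity
  field_simp

lemma sum_W_sq (Z : Finset (Fin n → Bool)) (k : ℕ) :
    ∑ s ∈ Finset.univ.filter (fun s : Fin n → Bool => wt s = k), (Wc n Z s)^2
      = ∑ i ∈ Finset.range (n+1), ((kraw n k i : ℤ):ℝ)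
          * (((Z ×ˢ Z).filter (fun p => hammingDist p.1 p.2 = i)).card : ℝ) := by
  classical
  have h1 : ∀ s : Fin n → Bool, (Wc n Z s)^2
      = ∑ p ∈ Z ×ˢ Z, chi s (fun i => xor (p.1 i) (p.2 i)) := by
    intro s
    rw [Wc, sq, Finset.sum_mul_sum, ← Finset.sum_product']
    apply Finset.sum_congr rfl
    intro p _
    rw [chi_mul]
  rw [Finset.sum_congr rfl (fun s _ => h1 s), Finset.sum_comm]
  have h2 : ∀ p ∈ Z ×ˢ Z,
      ∑ s ∈ Finset.univ.filter (fun s : Fin n → Bool => wt s = k),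
          chi s (fun i => xor (p.1 i) (p.2 i))
        = ((kraw n k (hammingDist p.1 p.2) : ℤ) : ℝ) := by
    intro p _
    rw [Finset.sum_congr rfl (fun s _ => chi_comm s _), sum_chi_wt, hamming_wt]
  rw [Finset.sum_congr rfl h2]
  have hmaps : ∀ p ∈ Z ×ˢ Z, hammingDist p.1 p.2 ∈ Finset.range (n+1) := by
    intro p _
    rw [Finset.mem_range, Nat.lt_succ_iff]
    calc hammingDist p.1 p.2 ≤ Fintype.card (Fin n) := hammingDist_le_card_fintype
      _ = n := Fintype.card_fin n
  rw [← Finset.sum_fiberwise_of_maps_to hmaps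
    (fun p => ((kraw n k (hammingDist p.1 p.2) : ℤ) : ℝ))]
  apply Finset.sum_congr rfl
  intro i _
  have : ∀ p ∈ (Z ×ˢ Z).filter (fun p => hammingDist p.1 p.2 = i),
      ((kraw n k (hammingDist p.1 p.2) : ℤ) : ℝ) = ((kraw n k i : ℤ) : ℝ) := by
    intro p hp
    rw [(Finset.mem_filter.mp hp).2]
  rw [Finset.sum_congr rfl this, Finset.sum_const, nsmul_eq_mul, mul_comm]

end Aux2

namespace Aux2
open Aux Finset
variable {n : ℕ}

lemma g_eq (Z : Finset (Fin n → Bool)) (t : ℕ) (x : Fin n → Bool) :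
    (Z.card : ℝ)⁻¹ * ((Z.filter (fun z => hammingDist x z ≤ t)).card : ℝ)
      - ((2:ℝ)^n)⁻¹ *
          ((Finset.univ.filter (fun z : Fin n → Bool => hammingDist x z ≤ t)).card : ℝ)
    = ∑ z : Fin n → Bool, cc n Z z * ff n t (fun i => xor (x i) (z i)) := by
  have hffd : ∀ z, ff n t (fun i => xor (x i) (z i))
      = if hammingDist x z ≤ t then (1:ℝ) else 0 := by
    intro z
    rw [ff, hamming_wt]
  rw [Finset.sum_congr rfl (fun z (_ : z ∈ Finset.univ) =>
    (by rw [cc, hffd z]; ring : cc n Z z * ff n t (fun i => xor (x i) (z i))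
      = (Z.card:ℝ)⁻¹ * ((if z ∈ Z then (1:ℝ) else 0) * (if hammingDist x z ≤ t then (1:ℝ) else 0))
        - ((2:ℝ)^n)⁻¹ * (if hammingDist x z ≤ t then (1:ℝ) else 0)))]
  rw [Finset.sum_sub_distrib, ← Finset.mul_sum, ← Finset.mul_sum, indicator_sum]
  rw [Finset.sum_boole, Finset.sum_boole]

end Aux2

open Aux Aux2 in
/-- Transform-domain expression of the discrepancy:
`D^{L2}(Z) = 2^{−n}·Σ_{k=1}^n A_k^⊥·Σ_{t=0}^{n−1} (K_t^{(n−1)}(k−1))²`. -/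
theorem discrepancy_dual_expansion (n : ℕ) (Z : Finset (Fin n → Bool)) (hZ : Z.Nonempty) :
    disc n Z
      = ((2 : ℝ) ^ n)⁻¹ * ∑ k ∈ Finset.Icc 1 n, dualDistDistr n Z k *
          ∑ t ∈ Finset.range n, ((kraw (n - 1) t (k - 1) : ℝ)) ^ 2 := by
  classical
  have key : disc n Z = ∑ t ∈ Finset.range (n+1), ∑ x : Fin n → Bool,
      (∑ z : Fin n → Bool, cc n Z z * ff n t (fun i => xor (x i) (z i)))^2 := by
    rw [disc]
    exact Finset.sum_congr rfl fun t _ => Finset.sum_congr rfl fun x _ => by rw [g_eq Z t x]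
  rw [key, Finset.sum_congr rfl (fun t _ => step_t Z hZ t), ← Finset.mul_sum]
  congr 1
  rw [Finset.sum_comm]
  -- now : ∑_{s ≠ 0} ∑_{t ∈ range (n+1)} (N⁻¹ W s)^2 * (Fh t s)^2
  have per_s : ∀ s ∈ Finset.univ.filter (fun s : Fin n → Bool => s ≠ (fun _ => false)),
      ∑ t ∈ Finset.range (n+1), ((Z.card:ℝ)⁻¹ * Wc n Z s)^2 * (Fh n t s)^2
        = ((Z.card:ℝ)⁻¹ * Wc n Z s)^2 *
            ∑ t ∈ Finset.range n, ((kraw (n-1) t (wt s - 1) : ℤ) : ℝ)^2 := by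
    intro s hs
    simp only [Finset.mem_filter, Finset.mem_univ, true_and] at hs
    have hk0 : wt s ≠ 0 := fun h => hs ((wt_eq_zero_iff s).mp h)
    have hkn : wt s ≤ n := wt_le s
    rw [← Finset.mul_sum]
    congr 1
    rw [Finset.sum_congr rfl (fun t _ => by rw [Fh_eq t s hs]), Finset.sum_range_succ]
    have hz : kraw (n-1) n (wt s - 1) = 0 :=
      kraw_eq_zero (by omega) (by omega)
    rw [hz]
    norm_num
  rw [Finset.sum_congr rfl per_s]
  -- regroup by weight
  have hmaps : ∀ s ∈ Finset.univ.filter (fun s : Fin n → Bool => s ≠ (fun _ => false)),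
      wt s ∈ Finset.Icc 1 n := by
    intro s hs
    simp only [Finset.mem_filter, Finset.mem_univ, true_and] at hs
    have hk0 : wt s ≠ 0 := fun h => hs ((wt_eq_zero_iff s).mp h)
    rw [Finset.mem_Icc]
    exact ⟨by omega, wt_le s⟩
  rw [← Finset.sum_fiberwise_of_maps_to hmaps
    (fun s => ((Z.card:ℝ)⁻¹ * Wc n Z s)^2 *
      ∑ t ∈ Finset.range n, ((kraw (n-1) t (wt s - 1) : ℤ) : ℝ)^2)]
  apply Finset.sum_congr rfl
  intro k hk
  rw [Finset.mem_Icc] at hk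
  have hfib : (Finset.univ.filter (fun s : Fin n → Bool => s ≠ (fun _ => false))).filter
      (fun s => wt s = k)
      = Finset.univ.filter (fun s : Fin n → Bool => wt s = k) := by
    rw [Finset.filter_filter]
    apply Finset.filter_congr
    intro s _
    constructor
    · exact fun h => h.2
    · intro h
      refine ⟨fun hc => ?_, h⟩
      rw [← wt_eq_zero_iff] at hc
      omega
  rw [hfib]
  have inner_eq : ∀ s ∈ Finset.univ.filter (fun s : Fin n → Bool => wt s = k),
      ((Z.card:ℝ)⁻¹ * Wc n Z s)^2 *
          ∑ t ∈ Finset.range n, ((kraw (n-1) t (wt s - 1) : ℤ) : ℝ)^2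
        = ((Z.card:ℝ)⁻¹ * Wc n Z s)^2 *
          ∑ t ∈ Finset.range n, ((kraw (n-1) t (k - 1) : ℤ) : ℝ)^2 := by
    intro s hs
    rw [(Finset.mem_filter.mp hs).2]
  rw [Finset.sum_congr rfl inner_eq, ← Finset.sum_mul]
  congr 1
  -- ∑_{wt s = k} (N⁻¹ W s)^2 = dualDistDistr n Z k
  have hW : ∑ s ∈ Finset.univ.filter (fun s : Fin n → Bool => wt s = k),
      ((Z.card:ℝ)⁻¹ * Wc n Z s)^2
      = ((Z.card:ℝ)⁻¹)^2 * ∑ s ∈ Finset.univ.filter (fun s : Fin n → Bool => wt s = k),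
          (Wc n Z s)^2 := by
    rw [Finset.mul_sum]
    exact Finset.sum_congr rfl fun s _ => by ring
  rw [hW, sum_W_sq Z k, dualDistDistr, Finset.mul_sum, Finset.mul_sum]
  apply Finset.sum_congr rfl
  intro i _
  rw [distDistr]
  ring
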